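/- Let G be a group containing a finite normal subgroup A such that the quotient G/A is infinite cyclic. Then there exists an integer N ≥ 1 such that g^N lies in the center of G for every g ∈ G. -/
import Mathlib


/-- If a group `G` has a finite normal subgroup `A` with `G/A` infinite cyclic,
then some fixed positive power of every element of `G` is central. -/
theorem pow_central_of_finite_by_infinite_cyclic
    (G : Type*) [Group G] (A : Subgroup G) [A.Normal] [Finite A]
    (hcyc : Nonempty ((G ⧸ A) ≃* Multiplicative ℤ)) :
    ∃ N : ℕ, 1 ≤ N ∧ ∀ g : G, g ^ N ∈ Subgroup.center G := by
  obtain ⟨e⟩ := hcyc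
  have habel : ∀ x y : G ⧸ A, x * y = y * x := fun x y =>
    e.injective (by rw [map_mul, map_mul, mul_comm])
  set φ : G →* MulAut A := MulAut.conjNormal with hφ
  have hfinAut : Finite (MulAut A) :=
    Finite.of_injective MulEquiv.toEquiv (fun f g h =>
      MulEquiv.ext fun x => congrArg (fun e => e x) h)
  have hfinQ : Finite (G ⧸ φ.ker) :=
    Finite.of_injective _ (QuotientGroup.kerLift_injective φ)
  set d := Nat.card (G ⧸ φ.ker) with hd
  have hdpos : 0 < d := Nat.card_pos
  set n := Nat.card A with hn
  have hnpos : 0 < n := Nat.card_pos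
  refine ⟨d * n, Nat.one_le_iff_ne_zero.mpr (by positivity), fun g => ?_⟩
  -- g ^ d lies in the centralizer of A
  have hgd : g ^ d ∈ φ.ker := by
    have h1 : ((g ^ d : G) : G ⧸ φ.ker) = 1 := by
      rw [QuotientGroup.mk_pow]
      exact pow_card_eq_one'
    exact (QuotientGroup.eq_one_iff _).mp h1
  set c := g ^ d with hc
  have hcA : ∀ a : G, a ∈ A → c * a * c⁻¹ = a := by
    intro a ha
    have h2 : φ c ⟨a, ha⟩ = ⟨a, ha⟩ := by rw [MonoidHom.mem_ker.mp hgd]; rfl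
    have := congrArg (Subtype.val) h2
    simpa [hφ] using this
  -- c ^ n is central
  have hcent : ∀ h : G, (c ^ n) * h = h * (c ^ n) := by
    intro h
    set a := c * h * c⁻¹ * h⁻¹ with ha
    have haA : a ∈ A := by
      have : ((a : G) : G ⧸ A) = 1 := by
        simp only [ha, QuotientGroup.mk_mul, QuotientGroup.mk_inv]
        rw [habel (↑c) (↑h)]
        group
      exact (QuotientGroup.eq_one_iff _).mp this
    have key : ∀ k : ℕ, c ^ k * h * (c ^ k)⁻¹ = a ^ k * h := by
      intro k
      induction k with
      | zero => simp
      | succ k ih =>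
        have : c ^ (k + 1) * h * (c ^ (k + 1))⁻¹ = c * (c ^ k * h * (c ^ k)⁻¹) * c⁻¹ := by
          rw [pow_succ']; group
        rw [this, ih]
        have haa : c * a ^ k * c⁻¹ = a ^ k := hcA _ (pow_mem haA k)
        calc c * (a ^ k * h) * c⁻¹ = (c * a ^ k * c⁻¹) * (c * h * c⁻¹) := by group
          _ = a ^ k * (a * h) := by rw [haa, ha]; group
          _ = a ^ (k + 1) * h := by rw [pow_succ']; group
    have han : a ^ n = 1 := by
      have : (⟨a, haA⟩ : A) ^ n = 1 := pow_card_eq_one'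
      have := congrArg (Subtype.val) this
      simpa using this
    have := key n
    rw [han, one_mul] at this
    calc c ^ n * h = (c ^ n * h * (c ^ n)⁻¹) * c ^ n := by group
      _ = h * c ^ n := by rw [this]
  rw [Subgroup.mem_center_iff]
  intro h
  rw [pow_mul]
  show h * c ^ n = c ^ n * h
  exact (hcent h).symm
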